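/- If v_i = (v₀ - ω₀ȳ)cos θ̄ + ω₀x̄ sin θ̄ with θ̄ = atan2(ω₀x̄, v₀ - ω₀ȳ), ω₀ ≠ 0, and (x̄, ȳ) ≠ (0, 0), then v_i ≠ v₀ unless (ω₀x̄)² + (ω₀ȳ)² = 2v₀ω₀ȳ; in particular, for a formation that is not a translational straight-line formation (ω₀ ≠ 0) and with offset satisfying x̄² + ȳ² ≠ 2(v₀/ω₀)ȳ, the follower's linear speed differs from the leader's. -/

import Mathlib

/-- The two-argument arctangent: atan2 y x is the angle of the point (x, y). -/
noncomputable def atan2 (y x : ℝ) : ℝ := Complex.arg ⟨x, y⟩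

theorem stmt_14 (ω₀ v₀ xb yb : ℝ) (hω : ω₀ ≠ 0) (hxy : ¬(xb = 0 ∧ yb = 0))
    (h : (ω₀ * xb) ^ 2 + (ω₀ * yb) ^ 2 ≠ 2 * v₀ * ω₀ * yb) :
    (v₀ - ω₀ * yb) * Real.cos (atan2 (ω₀ * xb) (v₀ - ω₀ * yb))
        + ω₀ * xb * Real.sin (atan2 (ω₀ * xb) (v₀ - ω₀ * yb)) ≠ v₀ := by
  set x : ℝ := v₀ - ω₀ * yb with hx
  set y : ℝ := ω₀ * xb with hy
  set z : ℂ := ⟨x, y⟩ with hz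
  by_cases hz0 : z = 0
  · have hx0 : x = 0 := congrArg Complex.re hz0
    have hy0 : y = 0 := congrArg Complex.im hz0
    have hv : v₀ ≠ 0 := by
      intro hv0
      apply h
      have hxb : xb = 0 := by
        rcases mul_eq_zero.mp hy0 with h' | h'
        · exact absurd h' hω
        · exact h'
      have hyb : ω₀ * yb = 0 := by rw [hx] at hx0; linarith
      rw [hv0]
      simp only [hy, hxb]
      nlinarith [hyb]
    rw [hx0, hy0]
    simpa [eq_comm] using hv
  · have hcos : Real.cos (atan2 y x) = x / ‖z‖ := by
      rw [atan2]
      exact Complex.cos_arg hz0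
    have hsin : Real.sin (atan2 y x) = y / ‖z‖ := by
      rw [atan2]
      exact Complex.sin_arg z
    rw [hcos, hsin]
    have habs : (‖z‖) ^ 2 = x ^ 2 + y ^ 2 := by
      rw [Complex.sq_norm, Complex.normSq_apply]; ring
    have habs_pos : 0 < ‖z‖ := by
      simpa using (norm_pos_iff.mpr hz0)
    intro heq
    have hval : x * (x / ‖z‖) + y * (y / ‖z‖) = ‖z‖ := by
      field_simp
      nlinarith [habs]
    rw [hval] at heq
    apply h
    have : x ^ 2 + y ^ 2 = v₀ ^ 2 := by rw [← habs, heq]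
    simp only [hy] at this
    rw [hx] at this
    show (ω₀ * xb) ^ 2 + (ω₀ * yb) ^ 2 = 2 * v₀ * ω₀ * yb
    linear_combination this
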